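/- There exist a finitely generated monoid A and an admissible short exact sequence 0 → N → M → M/N → 0 of finite A-modules such that N and M/N are of type α but M is not of type α. Concretely, for A = F₁⟨t⟩ the free monoid on one generator t (with zero adjoined), the module M = {0, a, b, c, d} with t·a = t·b = c, t·c = d, t·d = 0, and the submodule N = {0, a, c, d}, give such a sequence. -/

import Mathlib

universe u v

/-- A module over a monoid-with-zero `A` on a pointed set ("vector space over 𝔽₁"):
a pointed set `(M, 0)` with an action of `A` satisfying `1•m = m`, `(a*b)•m = a•(b•m)`,
`0•m = 0` and `a•0 = 0`. -/
structure FModule (A : Type v) [MonoidWithZero A] : Type (max (u + 1) v) where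
  carrier : Type u
  zero : carrier
  smul : A → carrier → carrier
  one_smul : ∀ m, smul 1 m = m
  mul_smul : ∀ a b m, smul (a * b) m = smul a (smul b m)
  zero_smul : ∀ m, smul 0 m = zero
  smul_zero : ∀ a, smul a zero = zero

namespace FModule

variable {A : Type v} [MonoidWithZero A]

/-- `N` is an `A`-submodule of `M` : a subset containing the basepoint and closed under
the action of `A`. -/
def IsSubmod (M : FModule A) (N : Set M.carrier) : Prop :=
  M.zero ∈ N ∧ ∀ (a : A), ∀ m ∈ N, M.smul a m ∈ N

/-- The submodule `N ⊆ M` as an `A`-module in its own right. -/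
def sub (M : FModule A) (N : Set M.carrier) (h : M.IsSubmod N) : FModule A where
  carrier := N
  zero := ⟨M.zero, h.1⟩
  smul a m := ⟨M.smul a m.1, h.2 a m.1 m.2⟩
  one_smul m := Subtype.ext (M.one_smul m.1)
  mul_smul a b m := Subtype.ext (M.mul_smul a b m.1)
  zero_smul m := Subtype.ext (M.zero_smul m.1)
  smul_zero a := Subtype.ext (M.smul_zero a)

open Classical in
/-- The quotient `M/N` of `M` by a submodule `N`: the pointed set `(M ∖ N) ∪ {0}`
with the induced `A`-action. -/
noncomputable def quot (M : FModule A) (N : Set M.carrier) (h : M.IsSubmod N) :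
    FModule A where
  carrier := {x : M.carrier // x = M.zero ∨ x ∉ N}
  zero := ⟨M.zero, Or.inl rfl⟩
  smul a m := if hmem : M.smul a m.1 ∈ N then ⟨M.zero, Or.inl rfl⟩
    else ⟨M.smul a m.1, Or.inr hmem⟩
  one_smul := by
    classical
    rintro ⟨x, hx⟩
    by_cases hmem : M.smul 1 x ∈ N
    · have hxN : x ∈ N := by rwa [M.one_smul] at hmem
      have hx0 : x = M.zero := hx.resolve_right fun hc => hc hxN
      simp only [dif_pos hmem]
      exact Subtype.ext hx0.symm
    · simp only [dif_neg hmem]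
      exact Subtype.ext (M.one_smul x)
  mul_smul := by
    classical
    rintro a b ⟨x, hx⟩
    by_cases hb : M.smul b x ∈ N
    · have hab : M.smul (a * b) x ∈ N := by
        rw [M.mul_smul]; exact h.2 a _ hb
      have h0 : M.smul a M.zero ∈ N := by
        rw [M.smul_zero]; exact h.1
      simp only [dif_pos hb, dif_pos hab, dif_pos h0]
    · by_cases hab : M.smul a (M.smul b x) ∈ N
      · have hab' : M.smul (a * b) x ∈ N := by rw [M.mul_smul]; exact hab
        simp only [dif_pos hab', dif_neg hb, dif_pos hab]
      · have hab' : M.smul (a * b) x ∉ N := by rw [M.mul_smul]; exact hab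
        simp only [dif_neg hab', dif_neg hb, dif_neg hab]
        exact Subtype.ext (M.mul_smul a b x)
  zero_smul := by
    classical
    rintro ⟨x, hx⟩
    have h0 : M.smul 0 x ∈ N := by rw [M.zero_smul]; exact h.1
    simp only [dif_pos h0]
  smul_zero := by
    classical
    intro a
    have h0 : M.smul a M.zero ∈ N := by rw [M.smul_zero]; exact h.1
    simp only [dif_pos h0]

/-- A morphism of `A`-modules: a pointed map compatible with the `A`-action. -/
structure Hom (M N : FModule A) where
  toFun : M.carrier → N.carrier
  map_zero : toFun M.zero = N.zero
  map_smul : ∀ a m, toFun (M.smul a m) = N.smul a (toFun m)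

/-- A morphism is normal if every fibre other than the fibre of the basepoint has at
most one element. -/
def Hom.Normal {M N : FModule A} (f : Hom M N) : Prop :=
  ∀ m m', f.toFun m = f.toFun m' → f.toFun m ≠ N.zero → m = m'

/-- Composition of morphisms. -/
def Hom.comp {M N L : FModule A} (g : Hom N L) (f : Hom M N) : Hom M L where
  toFun := g.toFun ∘ f.toFun
  map_zero := by
    show g.toFun (f.toFun M.zero) = L.zero
    rw [f.map_zero, g.map_zero]
  map_smul a m := by
    show g.toFun (f.toFun (M.smul a m)) = L.smul a (g.toFun (f.toFun m))
    rw [f.map_smul, g.map_smul]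

/-- An isomorphism of `A`-modules. -/
structure Iso (M N : FModule A) where
  toEquiv : M.carrier ≃ N.carrier
  map_zero : toEquiv M.zero = N.zero
  map_smul : ∀ a m, toEquiv (M.smul a m) = N.smul a (toEquiv m)

def Iso.refl (M : FModule A) : Iso M M := ⟨Equiv.refl _, rfl, fun _ _ => rfl⟩

def Iso.symm {M N : FModule A} (e : Iso M N) : Iso N M where
  toEquiv := e.toEquiv.symm
  map_zero := by rw [Equiv.symm_apply_eq, e.map_zero]
  map_smul a m := by
    apply e.toEquiv.injective
    rw [e.map_smul, Equiv.apply_symm_apply, Equiv.apply_symm_apply]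

def Iso.trans {M N L : FModule A} (e : Iso M N) (f : Iso N L) : Iso M L where
  toEquiv := e.toEquiv.trans f.toEquiv
  map_zero := by
    simp only [Equiv.trans_apply, e.map_zero, f.map_zero]
  map_smul a m := by
    simp only [Equiv.trans_apply, e.map_smul, f.map_smul]

/-- The wedge sum (direct sum, coproduct) `M ⊕ N` of two `A`-modules, realized as the
subset of `M × N` of pairs with at least one coordinate equal to the basepoint. -/
def wedge (M N : FModule A) : FModule A where
  carrier := {p : M.carrier × N.carrier // p.1 = M.zero ∨ p.2 = N.zero}
  zero := ⟨(M.zero, N.zero), Or.inl rfl⟩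
  smul a p := ⟨(M.smul a p.1.1, N.smul a p.1.2), by
    rcases p.2 with h1 | h2
    · exact Or.inl (by rw [h1, M.smul_zero])
    · exact Or.inr (by rw [h2, N.smul_zero])⟩
  one_smul p := Subtype.ext (Prod.ext (M.one_smul _) (N.one_smul _))
  mul_smul a b p := Subtype.ext (Prod.ext (M.mul_smul _ _ _) (N.mul_smul _ _ _))
  zero_smul p := Subtype.ext (Prod.ext (M.zero_smul _) (N.zero_smul _))
  smul_zero a := Subtype.ext (Prod.ext (M.smul_zero _) (N.smul_zero _))

/-- A module `M` is of type α if every `a ∈ A` acts on `M` by a normal map of pointed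
sets, i.e. `a•m₁ = a•m₂` implies `m₁ = m₂` or `a•m₁ = a•m₂ = 0`. -/
def TypeAlpha (M : FModule A) : Prop :=
  ∀ (a : A) (m₁ m₂ : M.carrier),
    M.smul a m₁ = M.smul a m₂ → m₁ = m₂ ∨ M.smul a m₁ = M.zero

/-- A module is indecomposable if it is nonzero and admits no decomposition as a wedge
sum (internally: a pair of submodules covering `M` and meeting only in `0`) with both
pieces nonzero. -/
def Indecomposable (M : FModule A) : Prop :=
  (∃ m : M.carrier, m ≠ M.zero) ∧
  ∀ P Q : Set M.carrier, M.IsSubmod P → M.IsSubmod Q → P ∪ Q = Set.univ →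
    P ∩ Q ⊆ {M.zero} → P = {M.zero} ∨ Q = {M.zero}

end FModule
namespace FModule

variable {A : Type v} [MonoidWithZero A]

/-- The canonical inclusion `N → M` of a submodule. -/
def inclHom (M : FModule A) (N : Set M.carrier) (h : M.IsSubmod N) :
    Hom (M.sub N h) M where
  toFun := Subtype.val
  map_zero := rfl
  map_smul _ _ := rfl

open Classical in
/-- The canonical projection `M → M/N`. -/
noncomputable def projHom (M : FModule A) (N : Set M.carrier) (h : M.IsSubmod N) :
    Hom M (M.quot N h) where
  toFun m := if hm : m ∈ N then ⟨M.zero, Or.inl rfl⟩ else ⟨m, Or.inr hm⟩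
  map_zero := dif_pos h.1
  map_smul a m := by
    show _ = (M.quot N h).smul a _
    simp only [FModule.quot]
    by_cases hm : m ∈ N
    · simp only [dif_pos hm, dif_pos (h.2 a m hm),
        dif_pos (show M.smul a M.zero ∈ N by rw [M.smul_zero]; exact h.1)]
    · simp only [dif_neg hm]

end FModule


/-- The monoid 𝔽₁⟨t⟩ truncated: {0, 1, t, t², t³} with t⁴ = 0. -/
inductive A5 : Type
  | z | e | t1 | t2 | t3
  deriving DecidableEq

instance : Fintype A5 :=
  ⟨{A5.z, A5.e, A5.t1, A5.t2, A5.t3}, by intro x; cases x <;> decide⟩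

namespace A5

def mul' : A5 → A5 → A5
  | z, _ => z
  | _, z => z
  | e, x => x
  | x, e => x
  | t1, t1 => t2
  | t1, t2 => t3
  | t2, t1 => t3
  | _, _ => z

instance : MonoidWithZero A5 where
  mul := mul'
  one := e
  zero := z
  mul_assoc := by decide
  one_mul := by decide
  mul_one := by decide
  zero_mul := by decide
  mul_zero := by decide

end A5

def tAct : Fin 5 → Fin 5 := ![0, 3, 3, 4, 0]

def mSmul : A5 → Fin 5 → Fin 5
  | A5.z, _ => 0
  | A5.e, m => m
  | A5.t1, m => tAct m
  | A5.t2, m => tAct (tAct m)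
  | A5.t3, m => tAct (tAct (tAct m))

def Mex : FModule.{0} A5 where
  carrier := Fin 5
  zero := 0
  smul := mSmul
  one_smul := fun _ => rfl
  mul_smul := by decide
  zero_smul := fun _ => rfl
  smul_zero := by decide

def Nex : Set (Fin 5) := {x | x ≠ 2}

lemma key_smul_mem : ∀ (a : A5) (m : Fin 5), m ≠ 2 → mSmul a m ≠ 2 := by decide

lemma nex_submod : Mex.IsSubmod Nex := by
  refine ⟨?_, ?_⟩
  · show (0 : Fin 5) ≠ 2
    decide
  · intro a m hm
    exact key_smul_mem a m hm

lemma key2 : ∀ (a : A5), a ≠ 1 → ∀ x : Fin 5, (x = 0 ∨ x = 2) → mSmul a x ≠ 2 := by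
  decide

lemma quot_smul_eq_zero (a : A5) (ha : a ≠ 1)
    (m : (Mex.quot Nex nex_submod).carrier) :
    (Mex.quot Nex nex_submod).smul a m = (Mex.quot Nex nex_submod).zero := by
  rcases m with ⟨x, hx⟩
  have hx' : x = (0 : Fin 5) ∨ x = (2 : Fin 5) := by
    rcases hx with h | h
    · exact Or.inl h
    · exact Or.inr (not_not.mp h)
  have hmem : Mex.smul a x ∈ Nex := key2 a ha x hx'
  simp only [FModule.quot]
  erw [dif_pos hmem]

open FModule in
/-- There exist a finitely generated monoid `A` and an admissible short exact sequence
`0 → N → M → M/N → 0` of finite `A`-modules in which `N` and `M/N` are of type α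
but `M` is not (e.g. `A = 𝔽₁⟨t⟩`, `M = {0,a,b,c,d}` with `t·a = t·b = c`, `t·c = d`,
`t·d = 0`, and `N = {0,a,c,d}`). -/
theorem exists_non_typeAlpha_admissible_extension :
    ∃ (A : Type) (_ : MonoidWithZero A), Monoid.FG A ∧
      ∃ (M : FModule.{0} A) (_ : Finite M.carrier) (N : Set M.carrier)
        (h : M.IsSubmod N),
        -- `0 → N → M → M/N → 0` is an admissible short exact sequence:
        (∀ x, (inclHom M N h).toFun x = M.zero → x = (M.sub N h).zero) ∧
        {m | (projHom M N h).toFun m = (M.quot N h).zero} =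
          Set.range (inclHom M N h).toFun ∧
        Function.Surjective (projHom M N h).toFun ∧
        (inclHom M N h).Normal ∧ (projHom M N h).Normal ∧
        -- the sub and quotient are of type α, but the extension is not:
        (M.sub N h).TypeAlpha ∧ (M.quot N h).TypeAlpha ∧ ¬ M.TypeAlpha := by
  refine ⟨A5, inferInstance, Monoid.fg_of_finite, Mex, Finite.of_fintype (Fin 5), Nex,
    nex_submod, ?_, ?_, ?_, ?_, ?_, ?_, ?_, ?_⟩
  · -- incl injective at zero
    intro x hx
    exact Subtype.ext hx
  · -- kernel of proj = range of incl
    have hrange : Set.range (inclHom Mex Nex nex_submod).toFun = Nex :=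
      Subtype.range_val
    rw [hrange]
    ext m
    simp only [Set.mem_setOf_eq, projHom]
    constructor
    · intro hm
      by_contra hm'
      erw [dif_neg hm'] at hm
      have : m = Mex.zero := congrArg Subtype.val hm
      exact hm' (this ▸ nex_submod.1)
    · intro hm
      erw [dif_pos hm]
      rfl
  · -- surjectivity of proj
    rintro ⟨x, hx | hx⟩
    · refine ⟨Mex.zero, ?_⟩
      show (projHom Mex Nex nex_submod).toFun Mex.zero = _
      rw [(projHom Mex Nex nex_submod).map_zero]
      exact Subtype.ext hx.symm
    · refine ⟨x, ?_⟩
      show (projHom Mex Nex nex_submod).toFun x = _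
      simp only [projHom]
      erw [dif_neg hx]
  · -- incl normal
    intro m m' hmm _
    exact Subtype.ext hmm
  · -- proj normal
    intro m m' hmm hne
    have hm : m ∉ Nex := by
      intro hm
      apply hne
      show (projHom Mex Nex nex_submod).toFun m = _
      simp only [projHom]
      erw [dif_pos hm]
      rfl
    have hm' : m' ∉ Nex := by
      intro hm'
      apply hne
      rw [hmm]
      show (projHom Mex Nex nex_submod).toFun m' = _
      simp only [projHom]
      erw [dif_pos hm']
      rfl
    simp only [projHom] at hmm
    erw [dif_neg hm, dif_neg hm'] at hmm
    exact congrArg Subtype.val hmm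
  · -- sub type alpha
    intro a m₁ m₂ hs
    have : ∀ (a : A5) (x y : Fin 5), x ≠ 2 → y ≠ 2 →
        mSmul a x = mSmul a y → x = y ∨ mSmul a x = 0 := by decide
    rcases this a m₁.1 m₂.1 m₁.2 m₂.2 (congrArg Subtype.val hs) with h | h
    · exact Or.inl (Subtype.ext h)
    · exact Or.inr (Subtype.ext h)
  · -- quot type alpha
    intro a m₁ m₂ hs
    by_cases ha : a = 1
    · subst ha
      rw [(Mex.quot Nex nex_submod).one_smul, (Mex.quot Nex nex_submod).one_smul] at hs
      exact Or.inl hs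
    · exact Or.inr (quot_smul_eq_zero a ha m₁)
  · -- M not type alpha
    intro h
    rcases h A5.t1 (1 : Fin 5) (2 : Fin 5) rfl with hc | hc
    · exact absurd hc (show (1 : Fin 5) ≠ (2 : Fin 5) by decide)
    · exact absurd hc (show mSmul A5.t1 (1 : Fin 5) ≠ (0 : Fin 5) by decide)
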